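/- Let n, k, s be integers with n ≥ 2k + 2 and 1 ≤ s ≤ k. The graph K_s ∨ ((n−2k+s−1)K_1 ∪ K_{2k−2s+1}) is connected and has matching number exactly k, i.e., it has a matching of size k but no matching of size k + 1. -/

import Mathlib

open Finset

lemma matching_two_mul {V : Type*} [Fintype V] {G : SimpleGraph V}
    {M : G.Subgraph} (h : M.IsMatching) : M.verts.ncard = 2 * M.edgeSet.ncard := by
  classical
  set p : V → V := fun v => if hv : v ∈ M.verts then (h hv).choose else v with hp
  have hadj : ∀ v, v ∈ M.verts → M.Adj v (p v) := by
    intro v hv; simp only [hp, dif_pos hv]; exact (h hv).choose_spec.1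
  have huniq : ∀ v, v ∈ M.verts → ∀ w, M.Adj v w → w = p v := by
    intro v hv w hw; simp only [hp, dif_pos hv]; exact (h hv).choose_spec.2 w hw
  have hmem : ∀ v, v ∈ M.verts → p v ∈ M.verts := fun v hv => ((hadj v hv).symm).fst_mem
  have hpp : ∀ v, v ∈ M.verts → p (p v) = v := fun v hv =>
    (huniq (p v) (hmem v hv) v (hadj v hv).symm).symm
  have hne : ∀ v, v ∈ M.verts → p v ≠ v := by
    intro v hv he
    exact (M.adj_sub (hadj v hv)).ne' he
  set f : V → Sym2 V := fun v => s(v, p v) with hf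
  set Vf := (Set.toFinite M.verts).toFinset with hVf
  set Ef := (Set.toFinite M.edgeSet).toFinset with hEf
  have hVmem : ∀ v, v ∈ Vf ↔ v ∈ M.verts := fun v => Set.Finite.mem_toFinset _
  have hEmem : ∀ e, e ∈ Ef ↔ e ∈ M.edgeSet := fun e => Set.Finite.mem_toFinset _
  have himg : Vf.image f = Ef := by
    ext e
    induction e with
    | _ x y =>
      simp only [mem_image, hEmem, SimpleGraph.Subgraph.mem_edgeSet]
      constructor
      · rintro ⟨v, hv, hfv⟩
        have hve : f v ∈ M.edgeSet := (hadj v ((hVmem v).1 hv))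
        rw [hfv] at hve
        exact hve
      · intro hxy
        refine ⟨x, (hVmem x).2 hxy.fst_mem, ?_⟩
        simp only [hf]
        rw [huniq x hxy.fst_mem y hxy]
  have hcard : Vf.card = ∑ e ∈ Vf.image f, (Vf.filter fun v => f v = e).card :=
    Finset.card_eq_sum_card_image f Vf
  have hfib : ∀ e ∈ Vf.image f, (Vf.filter fun v => f v = e).card = 2 := by
    intro e he
    obtain ⟨v₀, hv₀, rfl⟩ := Finset.mem_image.mp he
    have hv₀' := (hVmem v₀).1 hv₀
    have : (Vf.filter fun v => f v = f v₀) = {v₀, p v₀} := by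
      ext v
      simp only [mem_filter, mem_insert, mem_singleton, hVmem]
      constructor
      · rintro ⟨hv, hfv⟩
        simp only [hf, Sym2.eq, Sym2.rel_iff', Prod.mk.injEq, Prod.swap_prod_mk] at hfv
        rcases hfv with ⟨h1, -⟩ | ⟨h1, -⟩
        · exact Or.inl h1
        · exact Or.inr h1
      · rintro (rfl | rfl)
        · exact ⟨hv₀', rfl⟩
        · refine ⟨hmem v₀ hv₀', ?_⟩
          simp only [hf, hpp v₀ hv₀']
          exact Sym2.eq_swap
    rw [this, Finset.card_insert_of_notMem (by simpa using (hne v₀ hv₀').symm),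
      Finset.card_singleton]
  rw [Set.ncard_eq_toFinset_card _ (Set.toFinite M.verts),
    Set.ncard_eq_toFinset_card _ (Set.toFinite M.edgeSet), ← hVf, ← hEf, hcard,
    Finset.sum_congr rfl hfib, Finset.sum_const, himg, smul_eq_mul, mul_comm]

lemma ncard_val_filter (n : ℕ) (p : ℕ → Prop) [DecidablePred p] :
    {x : Fin n | p x.val}.ncard = ((Finset.range n).filter p).card := by
  classical
  rw [show {x : Fin n | p x.val} = ↑(Finset.univ.filter fun x : Fin n => p x.val) by
      ext x; simp]
  rw [Set.ncard_coe_finset]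
  apply Finset.card_nbij (i := Fin.val)
  · intro x hx
    simp only [coe_filter, mem_univ, true_and, Set.mem_setOf_eq, Finset.mem_coe,
      Finset.mem_filter, Finset.mem_range] at hx ⊢
    exact ⟨x.isLt, hx⟩
  · intro x hx y hy hxy; exact Fin.val_injective hxy
  · intro v hv
    simp only [coe_filter, mem_univ, true_and, Set.mem_setOf_eq, Finset.mem_coe,
      Finset.mem_filter, Finset.mem_range, Set.mem_image] at hv ⊢
    exact ⟨⟨v, hv.1⟩, hv.2, rfl⟩

/-- `G` has a matching of size `m`: a set of `m` pairwise disjoint edges. -/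
def hasMatchingOfSize {V : Type*} (G : SimpleGraph V) (m : ℕ) : Prop :=
  ∃ M : SimpleGraph.Subgraph G, M.IsMatching ∧ M.edgeSet.ncard = m

/-- The graph `W n k s = K_s ∨ ((n−k+s)K_1 ∪ K_{k−2s})` on vertex set `Fin n`:
the first `s` vertices form a dominating clique `X`, the vertices with index
in `[s, k−s)` form a clique `Y` (so `X ∪ Y` is a clique on `k − s` vertices),
and the remaining `n − k + s` vertices are independent, joined only to `X`. -/
def Wgraph (n k s : ℕ) : SimpleGraph (Fin n) where
  Adj x y := x ≠ y ∧ (x.val < s ∨ y.val < s ∨ (x.val < k - s ∧ y.val < k - s))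
  symm := by constructor; rintro x y ⟨hxy, h⟩; exact ⟨hxy.symm, by tauto⟩
  loopless := by constructor; rintro x ⟨h, -⟩; exact h rfl

/-- For `n ≥ 2k + 2` and `1 ≤ s ≤ k`, the graph
`K_s ∨ ((n−2k+s−1)K_1 ∪ K_{2k−2s+1})` (which is `W_{n,2k+1,s}`) is connected
and has matching number exactly `k`. -/
theorem stmt_12 (n k s : ℕ) (hn : 2 * k + 2 ≤ n) (hs1 : 1 ≤ s) (hsk : s ≤ k) :
    (Wgraph n (2 * k + 1) s).Connected ∧
    hasMatchingOfSize (Wgraph n (2 * k + 1) s) k ∧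
    ¬ hasMatchingOfSize (Wgraph n (2 * k + 1) s) (k + 1) := by
  classical
  set G := Wgraph n (2 * k + 1) s with hG
  have hAdj : ∀ x y : Fin n, G.Adj x y ↔
      x ≠ y ∧ (x.val < s ∨ y.val < s ∨
        (x.val < 2 * k + 1 - s ∧ y.val < 2 * k + 1 - s)) := fun x y => Iff.rfl
  have h0 : (0 : ℕ) < n := by omega
  refine ⟨?_, ?_, ?_⟩
  · -- Connected
    rw [SimpleGraph.connected_iff]
    have key : ∀ w : Fin n, G.Reachable w ⟨0, h0⟩ := by
      intro w
      by_cases hw : w = ⟨0, h0⟩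
      · exact hw ▸ SimpleGraph.Reachable.refl _
      · exact SimpleGraph.Adj.reachable
          ⟨hw, Or.inr (Or.inl (show (0 : ℕ) < s by omega))⟩
    exact ⟨fun u v => (key u).trans (key v).symm, ⟨⟨0, h0⟩⟩⟩
  · -- matching of size k
    set pn : ℕ → ℕ := fun v =>
      if v < s then v + (2 * k + 1 - s)
      else if v < 2 * k - s then (if (v - s) % 2 = 0 then v + 1 else v - 1)
      else v - (2 * k + 1 - s) with hpn
    set S : ℕ → Prop := fun v =>
      v < 2 * k - s ∨ (2 * k + 1 - s ≤ v ∧ v < 2 * k + 1) with hS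
    have hkey : ∀ v, S v → S (pn v) ∧ pn (pn v) = v ∧ pn v ≠ v ∧ pn v < 2 * k + 1 ∧
        (v < s ∨ pn v < s ∨ (v < 2 * k + 1 - s ∧ pn v < 2 * k + 1 - s)) := by
      intro v hv
      simp only [hS, hpn] at hv ⊢
      split_ifs <;> omega
    set M : G.Subgraph :=
      { verts := {x : Fin n | S x.val}
      , Adj := fun x y => S x.val ∧ S y.val ∧ (y.val = pn x.val ∨ x.val = pn y.val)
      , adj_sub := by
          rintro x y ⟨hx, hy, (h | h)⟩
          · obtain ⟨-, -, hne, -, hadj⟩ := hkey x.val hx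
            exact ⟨fun he => hne (h ▸ congrArg Fin.val he.symm), by omega⟩
          · obtain ⟨-, -, hne, -, hadj⟩ := hkey y.val hy
            refine (G.symm.symm _ _ ?_)
            exact ⟨fun he => hne (h ▸ congrArg Fin.val he.symm), by omega⟩
      , edge_vert := fun h => h.1
      , symm := ⟨fun x y h => ⟨h.2.1, h.1, h.2.2.symm⟩⟩ } with hM
    have hmatch : M.IsMatching := by
      intro v hv
      have hv' : S v.val := hv
      obtain ⟨hpS, hppv, hne, hlt, -⟩ := hkey v.val hv'
      refine ⟨⟨pn v.val, by omega⟩, ⟨hv', hpS, Or.inl rfl⟩, ?_⟩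
      rintro y ⟨-, hy, (h | h)⟩
      · exact Fin.ext h
      · apply Fin.ext
        show y.val = pn v.val
        rw [h]
        exact ((hkey y.val hy).2.1).symm
    have hverts : M.verts.ncard = 2 * k := by
      have : M.verts = {x : Fin n | S x.val} := rfl
      rw [this, ncard_val_filter]
      have : (Finset.range n).filter S =
          Finset.range (2 * k - s) ∪ Finset.Ico (2 * k + 1 - s) (2 * k + 1) := by
        ext a
        simp only [Finset.mem_filter, Finset.mem_range, Finset.mem_union,
          Finset.mem_Ico, hS]
        omega
      rw [this, Finset.card_union_of_disjoint (by
        simp only [Finset.disjoint_left, Finset.mem_range, Finset.mem_Ico]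
        omega)]
      rw [Finset.card_range, Nat.card_Ico]
      omega
    have h2 := matching_two_mul hmatch
    exact ⟨M, hmatch, by omega⟩
  · -- no matching of size k+1
    rintro ⟨M, hM, hcard⟩
    have h2 := matching_two_mul hM
    set q : Fin n → Fin n := fun x => if hx : x ∈ M.verts then (hM hx).choose else x with hq
    have hqadj : ∀ x, x ∈ M.verts → M.Adj x (q x) := by
      intro x hx; simp only [hq, dif_pos hx]; exact (hM hx).choose_spec.1
    have hquniq : ∀ x, x ∈ M.verts → ∀ w, M.Adj x w → w = q x := by
      intro x hx w hw; simp only [hq, dif_pos hx]; exact (hM hx).choose_spec.2 w hw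
    set A := M.verts ∩ {x : Fin n | x.val < s} with hA
    set B := M.verts ∩ {x : Fin n | s ≤ x.val ∧ x.val < 2 * k + 1 - s} with hB
    set C := M.verts ∩ {x : Fin n | 2 * k + 1 - s ≤ x.val} with hC
    have hAcard : A.ncard ≤ s := by
      have h1 : A.ncard ≤ {x : Fin n | x.val < s}.ncard :=
        Set.ncard_le_ncard Set.inter_subset_right (Set.toFinite _)
      have h2 : {x : Fin n | x.val < s}.ncard ≤ s := by
        rw [ncard_val_filter n (fun v => v < s)]
        calc ((Finset.range n).filter fun v => v < s).card
            ≤ (Finset.range s).card := Finset.card_le_card (by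
              intro a ha
              simp only [Finset.mem_filter, Finset.mem_range] at ha ⊢
              omega)
          _ = s := Finset.card_range s
      omega
    have hBcard : B.ncard ≤ 2 * k + 1 - 2 * s := by
      have h1 : B.ncard ≤ {x : Fin n | s ≤ x.val ∧ x.val < 2 * k + 1 - s}.ncard :=
        Set.ncard_le_ncard Set.inter_subset_right (Set.toFinite _)
      have h2 : {x : Fin n | s ≤ x.val ∧ x.val < 2 * k + 1 - s}.ncard ≤ 2 * k + 1 - 2 * s := by
        rw [ncard_val_filter n (fun v => s ≤ v ∧ v < 2 * k + 1 - s)]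
        calc ((Finset.range n).filter fun v => s ≤ v ∧ v < 2 * k + 1 - s).card
            ≤ (Finset.Ico s (2 * k + 1 - s)).card := Finset.card_le_card (by
              intro a ha
              simp only [Finset.mem_filter, Finset.mem_range, Finset.mem_Ico] at ha ⊢
              omega)
          _ = 2 * k + 1 - s - s := Nat.card_Ico _ _
        omega
      omega
    have hCcard : C.ncard ≤ A.ncard := by
      apply Set.ncard_le_ncard_of_injOn q
      · rintro x ⟨hxv, hxs⟩
        have hadjG := M.adj_sub (hqadj x hxv)
        obtain ⟨hne, hor⟩ := hadjG
        have hxs' : 2 * k + 1 - s ≤ x.val := hxs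
        refine ⟨(hqadj x hxv).snd_mem, ?_⟩
        show (q x).val < s
        omega
      · rintro x ⟨hxv, -⟩ y ⟨hyv, -⟩ hxy
        have h1 : M.Adj (q x) x := (hqadj x hxv).symm
        have h2' : M.Adj (q x) y := hxy ▸ (hqadj y hyv).symm
        have hqm : q x ∈ M.verts := (hqadj x hxv).snd_mem
        rw [hquniq (q x) hqm x h1, hquniq (q x) hqm y h2']
    have hcover : M.verts ⊆ A ∪ B ∪ C := by
      intro x hx
      simp only [hA, hB, hC, Set.mem_union, Set.mem_inter_iff, Set.mem_setOf_eq]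
      by_cases h1 : x.val < s
      · exact Or.inl (Or.inl ⟨hx, h1⟩)
      · by_cases h2' : x.val < 2 * k + 1 - s
        · exact Or.inl (Or.inr ⟨hx, by omega, h2'⟩)
        · exact Or.inr ⟨hx, by omega⟩
    have hle : M.verts.ncard ≤ A.ncard + B.ncard + C.ncard := by
      calc M.verts.ncard ≤ (A ∪ B ∪ C).ncard :=
            Set.ncard_le_ncard hcover (Set.toFinite _)
        _ ≤ (A ∪ B).ncard + C.ncard := Set.ncard_union_le _ _
        _ ≤ A.ncard + B.ncard + C.ncard := by
            have := Set.ncard_union_le A B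
            omega
    omega
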